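/- Let M be a nonzero semi-artinian right R-module. Then M is monoform if and only if the socle of M is simple and does not embed into any proper factor module M/K with K ≠ 0. -/

import Mathlib

open Submodule

/-- In a module all of whose nonzero quotients have an atom, every nonzero
submodule contains an atom. -/
lemma exists_atom_le_aux {R M : Type*} [Ring R] [AddCommGroup M] [Module R M]
    (hsa : ∀ N : Submodule R M, N ≠ ⊤ → ∃ S : Submodule R (M ⧸ N), IsAtom S)
    (P : Submodule R M) (hP : P ≠ ⊥) : ∃ T : Submodule R M, IsAtom T ∧ T ≤ P := by
  obtain ⟨Q, -, hQmem, hQmax⟩ :=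
    zorn_le_nonempty₀ {Q : Submodule R M | Q ⊓ P = ⊥}
      (fun c hcs hc y hy => by
        refine ⟨sSup c, ?_, fun z hz => le_sSup hz⟩
        rw [Set.mem_setOf_eq, eq_bot_iff]
        intro x hx
        obtain ⟨hx1, hx2⟩ := Submodule.mem_inf.1 hx
        rw [mem_sSup_of_directed ⟨y, hy⟩ hc.directedOn] at hx1
        obtain ⟨Q, hQ, hxQ⟩ := hx1
        have hQP := hcs hQ
        rw [Set.mem_setOf_eq] at hQP
        rw [← hQP]
        exact Submodule.mem_inf.2 ⟨hxQ, hx2⟩) ⊥ (by simp)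
  have hQmem' : Q ⊓ P = ⊥ := hQmem
  have hQtop : Q ≠ ⊤ := by
    rintro rfl
    rw [top_inf_eq] at hQmem'
    exact hP hQmem'
  obtain ⟨S, hS⟩ := hsa Q hQtop
  set T : Submodule R M := comap Q.mkQ S ⊓ P with hT
  have hlt : Q < comap Q.mkQ S := by
    refine lt_of_le_of_ne (fun x hx => ?_) ?_
    · have hx0 : Q.mkQ x = 0 := (Submodule.Quotient.mk_eq_zero Q).2 hx
      simp [Submodule.mem_comap, hx0]
    · intro h
      have hmc : map Q.mkQ (comap Q.mkQ S) = S :=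
        Submodule.map_comap_eq_of_surjective Q.mkQ_surjective S
      rw [← h] at hmc
      apply hS.1
      rw [← hmc, eq_bot_iff]
      rintro y ⟨x, hxQ, rfl⟩
      simp [(Submodule.Quotient.mk_eq_zero Q).2 hxQ]
  have hTne : T ≠ ⊥ := by
    intro hbot
    exact hlt.not_ge (hQmax (hbot : comap Q.mkQ S ⊓ P = ⊥) hlt.le)
  refine ⟨T, ⟨hTne, fun U hU => ?_⟩, inf_le_right⟩
  by_contra hUne
  have hUP : U ≤ P := hU.le.trans inf_le_right
  have hUS : map Q.mkQ U ≤ S := by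
    rw [Submodule.map_le_iff_le_comap]
    exact hU.le.trans inf_le_left
  rcases eq_or_ne (map Q.mkQ U) ⊥ with hb | hnb
  · apply hUne
    rw [eq_bot_iff]
    intro x hx
    have hxQ : x ∈ Q := by
      have hxm : Q.mkQ x ∈ map Q.mkQ U := mem_map_of_mem hx
      rw [hb] at hxm
      rw [Submodule.mem_bot] at hxm
      rwa [← Submodule.Quotient.mk_eq_zero Q]
    have : x ∈ Q ⊓ P := ⟨hxQ, hUP hx⟩
    rwa [hQmem'] at this
  · have hmapeq : map Q.mkQ U = S := by
      rcases lt_or_eq_of_le hUS with h | h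
      · exact absurd (hS.2 _ h) hnb
      · exact h
    apply hU.not_ge
    intro t ht
    obtain ⟨htS, htP⟩ := ht
    have htm : Q.mkQ t ∈ map Q.mkQ U := by rw [hmapeq]; exact htS
    obtain ⟨u, huU, huv⟩ := htm
    have hsub : t - u ∈ Q := by
      have : Q.mkQ (t - u) = 0 := by
        rw [map_sub, huv, sub_self]
      rwa [← Submodule.Quotient.mk_eq_zero Q]
    have hsubP : t - u ∈ P := sub_mem htP (hUP huU)
    have : t - u ∈ Q ⊓ P := ⟨hsub, hsubP⟩
    rw [hQmem', Submodule.mem_bot, sub_eq_zero] at this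
    rwa [this]

/-- A nonzero semi-artinian right `R`-module `M` (every nonzero factor of `M`
has a simple submodule) is monoform iff its socle (the sum of all simple,
i.e. atomic, submodules) is simple and does not embed into any proper factor
module `M/K` with `K ≠ 0`.  Right modules are modelled over `Rᵐᵒᵖ`. -/
theorem stmt12 (R : Type*) [Ring R] (M : Type*) [AddCommGroup M] [Module Rᵐᵒᵖ M]
    (hM : Nontrivial M)
    (hsa : ∀ N : Submodule Rᵐᵒᵖ M, N ≠ ⊤ →
      ∃ S : Submodule Rᵐᵒᵖ (M ⧸ N), IsAtom S) :
    (∀ N : Submodule Rᵐᵒᵖ M, N ≠ ⊥ →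
        ∀ f : ↥N →ₗ[Rᵐᵒᵖ] M, f ≠ 0 → Function.Injective f) ↔
      (IsSimpleModule Rᵐᵒᵖ ↥(sSup {S : Submodule Rᵐᵒᵖ M | IsAtom S}) ∧
        ∀ K : Submodule Rᵐᵒᵖ M, K ≠ ⊥ →
          ∀ f : ↥(sSup {S : Submodule Rᵐᵒᵖ M | IsAtom S}) →ₗ[Rᵐᵒᵖ] (M ⧸ K),
            ¬ Function.Injective f) := by
  constructor
  · intro hmono
    -- there is an atom
    obtain ⟨S, hS, -⟩ := exists_atom_le_aux hsa ⊤ (by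
      intro h
      obtain ⟨x, hx⟩ := exists_ne (0 : M)
      have hxt : x ∈ (⊤ : Submodule Rᵐᵒᵖ M) := trivial
      rw [h, Submodule.mem_bot] at hxt
      exact hx hxt)
    -- uniqueness of atoms
    have huniq : ∀ T : Submodule Rᵐᵒᵖ M, IsAtom T → T = S := by
      intro T hT
      by_contra hne
      have hdisj : S ⊓ T = ⊥ := disjoint_iff.1 (hS.disjoint_of_ne hT (Ne.symm hne))
      set W := S ⊔ T with hW
      set S' : Submodule Rᵐᵒᵖ ↥W := comap W.subtype S with hS'
      set T' : Submodule Rᵐᵒᵖ ↥W := comap W.subtype T with hT'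
      have hcompl : IsCompl S' T' := by
        constructor
        · rw [disjoint_iff, eq_bot_iff]
          rintro x ⟨hx1, hx2⟩
          have : (x : M) ∈ S ⊓ T := ⟨hx1, hx2⟩
          rw [hdisj, Submodule.mem_bot] at this
          exact (Submodule.mem_bot _).2 (Subtype.ext this)
        · rw [codisjoint_iff, eq_top_iff]
          rintro x -
          obtain ⟨s, hs, t, ht, hst⟩ := Submodule.mem_sup.1 x.2
          have hsW : s ∈ W := le_sup_left (a := S) (b := T) hs
          have htW : t ∈ W := le_sup_right (a := S) (b := T) ht
          have : x = (⟨s, hsW⟩ : ↥W) + ⟨t, htW⟩ := by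
            ext; simp [← hst]
          rw [this]
          exact add_mem (mem_sup_left (by exact hs)) (mem_sup_right (by exact ht))
      set p := Submodule.linearProjOfIsCompl S' T' hcompl with hp
      set f : ↥W →ₗ[Rᵐᵒᵖ] M := W.subtype ∘ₗ S'.subtype ∘ₗ p with hf
      have hWne : W ≠ ⊥ := by
        intro h
        exact hS.1 (le_bot_iff.1 (h ▸ le_sup_left))
      obtain ⟨s, hsS, hs0⟩ := (Submodule.ne_bot_iff S).1 hS.1
      have hsW : s ∈ W := le_sup_left (a := S) (b := T) hsS
      have hfne : f ≠ 0 := by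
        intro h
        have h1 : f (((⟨⟨s, hsW⟩, hsS⟩ : ↥S') : ↥W)) = s := by
          show W.subtype (S'.subtype
            (Submodule.projectionOnto S' T' hcompl ((⟨⟨s, hsW⟩, hsS⟩ : ↥S') : ↥W))) = s
          rw [Submodule.linearProjOfIsCompl_apply_left hcompl (⟨⟨s, hsW⟩, hsS⟩ : ↥S')]
          rfl
        rw [h] at h1
        exact hs0 (by simpa using h1.symm)
      have hinj := hmono W hWne f hfne
      obtain ⟨t, htT, ht0⟩ := (Submodule.ne_bot_iff T).1 hT.1
      have htW : t ∈ W := le_sup_right (a := S) (b := T) htT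
      have h2 : f (((⟨⟨t, htW⟩, htT⟩ : ↥T') : ↥W)) = 0 := by
        show W.subtype (S'.subtype
          (Submodule.projectionOnto S' T' hcompl ((⟨⟨t, htW⟩, htT⟩ : ↥T') : ↥W))) = 0
        rw [Submodule.linearProjOfIsCompl_apply_right hcompl (⟨⟨t, htW⟩, htT⟩ : ↥T')]
        simp
      have := hinj (by rw [h2, map_zero] : f (((⟨⟨t, htW⟩, htT⟩ : ↥T') : ↥W)) = f 0)
      apply ht0
      simpa using congrArg (fun x : ↥W => (x : M)) this
    have hset : {T : Submodule Rᵐᵒᵖ M | IsAtom T} = {S} := by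
      ext T
      simp only [Set.mem_setOf_eq, Set.mem_singleton_iff]
      exact ⟨huniq T, fun h => h ▸ hS⟩
    have hsoc : sSup {T : Submodule Rᵐᵒᵖ M | IsAtom T} = S := by
      rw [hset, sSup_singleton]
    constructor
    · rw [hsoc]
      exact (isSimpleModule_iff_isAtom).2 hS
    · intro K hK
      rw [show sSup {S : Submodule Rᵐᵒᵖ M | IsAtom S} = S from hsoc]
      intro f hfinj
      -- build a non-injective nonzero map N → M
      have hSne : S ≠ ⊥ := hS.1
      set N : Submodule Rᵐᵒᵖ M := comap K.mkQ (LinearMap.range f) with hN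
      have hKN : K ≤ N := by
        intro x hx
        simp [hN, Submodule.mem_comap, (Submodule.Quotient.mk_eq_zero K).2 hx]
      have hNne : N ≠ ⊥ := fun h => hK (le_bot_iff.1 (h ▸ hKN))
      set e : ↥S ≃ₗ[Rᵐᵒᵖ] ↥(LinearMap.range f) := LinearEquiv.ofInjective f hfinj with he
      set c : ↥N →ₗ[Rᵐᵒᵖ] ↥(LinearMap.range f) :=
        LinearMap.codRestrict (LinearMap.range f) (K.mkQ ∘ₗ N.subtype)
          (fun x => Submodule.mem_comap.1 x.2) with hc
      set g : ↥N →ₗ[Rᵐᵒᵖ] M := S.subtype ∘ₗ (e.symm : ↥(LinearMap.range f) →ₗ[Rᵐᵒᵖ] ↥S) ∘ₗ c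
        with hg
      obtain ⟨x0, hx0S, hx00⟩ := (Submodule.ne_bot_iff S).1 hSne
      obtain ⟨m, hm⟩ := K.mkQ_surjective (f ⟨x0, hx0S⟩)
      have hmN : m ∈ N := by
        simp [hN, Submodule.mem_comap, hm]
      have hgm : g ⟨m, hmN⟩ = x0 := by
        have hcm : c ⟨m, hmN⟩ = e ⟨x0, hx0S⟩ := by
          apply Subtype.ext
          simp [hc, hm, he, LinearEquiv.ofInjective_apply]
        simp [hg, hcm]
      have hgne : g ≠ 0 := by
        intro h
        rw [h] at hgm
        exact hx00 (by simpa using hgm.symm)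
      have hginj := hmono N hNne g hgne
      obtain ⟨k, hkK, hk0⟩ := (Submodule.ne_bot_iff K).1 hK
      have hgk : g ⟨k, hKN hkK⟩ = 0 := by
        have hck : c ⟨k, hKN hkK⟩ = 0 := by
          apply Subtype.ext
          simp [hc, (Submodule.Quotient.mk_eq_zero K).2 hkK]
        simp [hg, hck]
      have := hginj (by rw [hgk, map_zero] : g ⟨k, hKN hkK⟩ = g 0)
      exact hk0 (by simpa using congrArg (fun x : ↥N => (x : M)) this)
  · rintro ⟨hsimp, hnoemb⟩ N hNne f hfne
    rw [← LinearMap.ker_eq_bot]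
    by_contra hker
    set soc := sSup {T : Submodule Rᵐᵒᵖ M | IsAtom T} with hsocdef
    have hatom : IsAtom soc := (isSimpleModule_iff_isAtom).1 hsimp
    set K₀ : Submodule Rᵐᵒᵖ M := map N.subtype (LinearMap.ker f) with hK₀
    obtain ⟨xk, hxk, hxk0⟩ := (Submodule.ne_bot_iff _).1 hker
    have hK₀ne : K₀ ≠ ⊥ := by
      rw [Submodule.ne_bot_iff]
      exact ⟨(xk : M), ⟨xk, hxk, rfl⟩, fun h => hxk0 (Subtype.ext h)⟩
    have hrange_ne : LinearMap.range f ≠ ⊥ := fun h => hfne (LinearMap.range_eq_bot.1 h)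
    have hle : soc ≤ LinearMap.range f := by
      obtain ⟨T, hT, hTle⟩ := exists_atom_le_aux hsa (LinearMap.range f) hrange_ne
      have hTsoc : T ≤ soc := le_sSup hT
      rcases lt_or_eq_of_le hTsoc with h | h
      · exact absurd (hatom.2 _ h) hT.1
      · rw [← h]; exact hTle
    set i1 : ↥soc →ₗ[Rᵐᵒᵖ] ↥(LinearMap.range f) := Submodule.inclusion hle with hi1
    set i2 : ↥(LinearMap.range f) ≃ₗ[Rᵐᵒᵖ] (↥N ⧸ LinearMap.ker f) :=
      (f.quotKerEquivRange).symm with hi2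
    have hcond : LinearMap.ker f ≤ comap N.subtype K₀ := by
      rw [← Submodule.map_le_iff_le_comap]
    set i3 : (↥N ⧸ LinearMap.ker f) →ₗ[Rᵐᵒᵖ] (M ⧸ K₀) :=
      Submodule.mapQ (LinearMap.ker f) K₀ N.subtype hcond with hi3
    have hi3inj : Function.Injective i3 := by
      rw [← LinearMap.ker_eq_bot, eq_bot_iff]
      intro x hx
      induction x using Submodule.Quotient.induction_on with
      | H a =>
        rw [LinearMap.mem_ker, hi3, Submodule.mapQ_apply,
          Submodule.Quotient.mk_eq_zero] at hx
        obtain ⟨y, hy, hya⟩ := hx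
        have : y = a := Subtype.ext hya
        rw [Submodule.mem_bot, Submodule.Quotient.mk_eq_zero]
        rwa [← this]
    set g : ↥soc →ₗ[Rᵐᵒᵖ] (M ⧸ K₀) :=
      i3 ∘ₗ (i2 : ↥(LinearMap.range f) →ₗ[Rᵐᵒᵖ] (↥N ⧸ LinearMap.ker f)) ∘ₗ i1 with hgdef
    have hginj : Function.Injective g := by
      rw [hgdef]
      exact hi3inj.comp (i2.injective.comp (Submodule.inclusion_injective hle))
    exact hnoemb K₀ hK₀ne g hginj
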